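/- Let n ≥ 1 and c_1,...,c_n > 0. The function e^{-2φ} where φ(z) = max_j c_j log|z_j| is integrable near 0 in ℂ^n if and only if Σ_j 1/c_j > 1. -/

import Mathlib

open MeasureTheory

namespace Stmt11Aux

open Real Set Metric Finset ENNReal

lemma null_coord (n : ℕ) (j : Fin n) : volume {z : Fin n → ℂ | z j = 0} = 0 := by
  have hset : {z : Fin n → ℂ | z j = 0}
      = Set.pi Set.univ (fun i => if i = j then ({0} : Set ℂ) else Set.univ) := by
    ext z
    simp only [Set.mem_setOf_eq, Set.mem_univ_pi]
    constructor
    · intro h i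
      by_cases hi : i = j
      · subst hi; simp [h]
      · simp [hi]
    · intro h
      have := h j
      simpa using this
  rw [hset, volume_pi_pi]
  exact Finset.prod_eq_zero (Finset.mem_univ j) (by simp)

lemma null_N (n : ℕ) : volume {z : Fin n → ℂ | ∃ j, z j = 0} = 0 := by
  have : {z : Fin n → ℂ | ∃ j, z j = 0} = ⋃ j, {z : Fin n → ℂ | z j = 0} := by
    ext z; simp
  rw [this]
  exact measure_iUnion_null fun j => null_coord n j

lemma measurable_f (n : ℕ) (hn : 1 ≤ n) (c : Fin n → ℝ) :
    Measurable fun z : Fin n → ℂ =>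
      Real.exp (-2 * ⨆ j, c j * Real.log (‖z j‖)) := by
  haveI : Nonempty (Fin n) := ⟨⟨0, hn⟩⟩
  have hM : Measurable fun z : Fin n → ℂ => ⨆ j, c j * Real.log (‖z j‖) := by
    have heq : (fun z : Fin n → ℂ => ⨆ j, c j * Real.log (‖z j‖))
        = Finset.univ.sup' Finset.univ_nonempty
            (fun j (z : Fin n → ℂ) => c j * Real.log (‖z j‖)) := by
      funext z
      rw [Finset.sup'_apply, Finset.sup'_univ_eq_ciSup]
    rw [heq]
    exact Finset.measurable_sup' _ fun j _ =>
      (Real.measurable_log.comp ((continuous_norm.measurable).comp (measurable_pi_apply j))).const_mul _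
  exact Real.measurable_exp.comp (hM.const_mul (-2))

/-- Layer cake computation of the integral over a polydisc. -/
lemma key (n : ℕ) (hn : 1 ≤ n) (c : Fin n → ℝ) (hc : ∀ j, 0 < c j) {ρ : ℝ} (hρ : 0 < ρ) :
    (∫⁻ z in Metric.ball (0 : Fin n → ℂ) ρ,
        ENNReal.ofReal (Real.exp (-2 * ⨆ j, c j * Real.log (‖z j‖))))
      = ∫⁻ t in Set.Ioi (0 : ℝ),
          ∏ j, (ENNReal.ofReal (min ρ (t ^ (-(2 * c j)⁻¹))) ^ 2 * NNReal.pi) := by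
  haveI : Nonempty (Fin n) := ⟨⟨0, hn⟩⟩
  rw [lintegral_eq_lintegral_meas_lt _ (ae_of_all _ fun z => (Real.exp_pos _).le)
    (measurable_f n hn c).aemeasurable]
  refine setLIntegral_congr_fun measurableSet_Ioi (fun t ht => ?_)
  have ht : (0 : ℝ) < t := ht
  rw [Measure.restrict_apply (measurableSet_lt measurable_const (measurable_f n hn c))]
  set N := {z : Fin n → ℂ | ∃ j, z j = 0} with hNdef
  have hN : volume N = 0 := null_N n
  set P : Set (Fin n → ℂ) :=
    Set.pi Set.univ (fun j => Metric.ball (0 : ℂ) (min ρ (t ^ (-(2 * c j)⁻¹)))) with hPdef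
  have hiff : ∀ z : Fin n → ℂ, (∀ j, z j ≠ 0) →
      ((t < Real.exp (-2 * ⨆ j, c j * Real.log (‖z j‖))) ↔
        ∀ j, ‖z j‖ < t ^ (-(2 * c j)⁻¹)) := by
    intro z hz
    rw [← Real.log_lt_iff_lt_exp ht,
      show (⨆ j, c j * Real.log (‖z j‖))
          = Finset.univ.sup' Finset.univ_nonempty
              (fun j => c j * Real.log (‖z j‖)) from
        (Finset.sup'_univ_eq_ciSup _).symm]
    have h1 : Real.log t <
        -2 * Finset.univ.sup' Finset.univ_nonempty (fun j => c j * Real.log (‖z j‖))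
        ↔ Finset.univ.sup' Finset.univ_nonempty (fun j => c j * Real.log (‖z j‖))
          < -Real.log t / 2 := by
      constructor <;> intro h <;> linarith
    rw [h1, Finset.sup'_lt_iff]
    constructor
    · intro h j
      have hj := h j (Finset.mem_univ j)
      have h2 : Real.log (‖z j‖) < -Real.log t / 2 / c j := by
        rw [lt_div_iff₀ (hc j)]
        linarith [hj]
      rw [Real.log_lt_iff_lt_exp (norm_pos_iff.2 (hz j))] at h2
      have h3 : Real.exp (-Real.log t / 2 / c j) = t ^ (-(2 * c j)⁻¹) := by
        rw [Real.rpow_def_of_pos ht]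
        congr 1
        have : c j ≠ 0 := (hc j).ne'
        field_simp
      rwa [h3] at h2
    · intro h j _
      have hj := h j
      have h3 : Real.exp (-Real.log t / 2 / c j) = t ^ (-(2 * c j)⁻¹) := by
        rw [Real.rpow_def_of_pos ht]
        congr 1
        have : c j ≠ 0 := (hc j).ne'
        field_simp
      rw [← h3, ← Real.log_lt_iff_lt_exp (norm_pos_iff.2 (hz j)), lt_div_iff₀ (hc j)] at hj
      linarith
  have hball : Metric.ball (0 : Fin n → ℂ) ρ
      = Set.pi Set.univ (fun _ : Fin n => Metric.ball (0 : ℂ) ρ) := ball_pi _ hρ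
  have hEP : ({z : Fin n → ℂ |
      t < Real.exp (-2 * ⨆ j, c j * Real.log (‖z j‖))} ∩ Metric.ball 0 ρ) \ N
      = P \ N := by
    rw [hball]
    ext z
    simp only [Set.mem_diff, Set.mem_inter_iff, Set.mem_setOf_eq, hNdef, hPdef,
      Set.mem_univ_pi, mem_ball_zero_iff, not_exists]
    constructor
    · rintro ⟨⟨h1, h2⟩, hz⟩
      exact ⟨fun j => lt_min (h2 j) ((hiff z hz).1 h1 j), hz⟩
    · rintro ⟨h1, hz⟩
      exact ⟨⟨(hiff z hz).2 fun j => lt_of_lt_of_le (h1 j) (min_le_right _ _),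
        fun j => lt_of_lt_of_le (h1 j) (min_le_left _ _)⟩, hz⟩
  calc volume ({z : Fin n → ℂ |
        t < Real.exp (-2 * ⨆ j, c j * Real.log (‖z j‖))} ∩ Metric.ball 0 ρ)
      = volume (({z : Fin n → ℂ |
        t < Real.exp (-2 * ⨆ j, c j * Real.log (‖z j‖))} ∩ Metric.ball 0 ρ) \ N) :=
        (measure_diff_null hN).symm
    _ = volume (P \ N) := by rw [hEP]
    _ = volume P := measure_diff_null hN
    _ = ∏ j, (ENNReal.ofReal (min ρ (t ^ (-(2 * c j)⁻¹))) ^ 2 * NNReal.pi) := by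
        rw [hPdef, volume_pi_pi]
        simp [Complex.volume_ball]

lemma sq_rpow (c : ℝ) (hc : 0 < c) {t : ℝ} (ht : 0 < t) :
    (t ^ (-(2 * c)⁻¹)) ^ 2 = t ^ (-c⁻¹) := by
  rw [← Real.rpow_natCast (t ^ (-(2 * c)⁻¹)) 2, ← Real.rpow_mul ht.le]
  congr 1
  have : c ≠ 0 := hc.ne'
  field_simp
  norm_num

lemma prod_rpow_eq (n : ℕ) (c : Fin n → ℝ) (hc : ∀ j, 0 < c j) {t : ℝ} (ht : 0 < t) :
    ∏ j, (t ^ (-(2 * c j)⁻¹)) ^ 2 = t ^ (-(∑ j, 1 / c j)) := by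
  have : ∀ j ∈ Finset.univ, (t ^ (-(2 * c j)⁻¹)) ^ 2 = t ^ (-(c j)⁻¹) :=
    fun j _ => sq_rpow (c j) (hc j) ht
  rw [Finset.prod_congr rfl this, ← Real.rpow_sum_of_pos ht]
  congr 1
  rw [← Finset.sum_neg_distrib]
  exact Finset.sum_congr rfl fun j _ => by rw [one_div]

lemma finite_of_gt (n : ℕ) (hn : 1 ≤ n) (c : Fin n → ℝ) (hc : ∀ j, 0 < c j)
    {ρ : ℝ} (hρ : 0 < ρ) (hS : 1 < ∑ j, 1 / c j) :
    (∫⁻ t in Set.Ioi (0 : ℝ),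
        ∏ j, (ENNReal.ofReal (min ρ (t ^ (-(2 * c j)⁻¹))) ^ 2 * NNReal.pi)) < ⊤ := by
  set S := ∑ j, 1 / c j with hSdef
  have hsplit : Set.Ioi (0 : ℝ) = Set.Ioc 0 1 ∪ Set.Ioi 1 :=
    (Set.Ioc_union_Ioi_eq_Ioi zero_le_one).symm
  rw [hsplit, lintegral_union measurableSet_Ioi Set.Ioc_disjoint_Ioi_same]
  have h1 : (∫⁻ t in Set.Ioc (0 : ℝ) 1,
      ∏ j, (ENNReal.ofReal (min ρ (t ^ (-(2 * c j)⁻¹))) ^ 2 * NNReal.pi)) < ⊤ := by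
    have hb : ∀ t : ℝ,
        (∏ j, (ENNReal.ofReal (min ρ (t ^ (-(2 * c j)⁻¹))) ^ 2 * NNReal.pi))
          ≤ ∏ _j : Fin n, (ENNReal.ofReal ρ ^ 2 * NNReal.pi) := by
      intro t
      refine Finset.prod_le_prod' fun j _ => ?_
      gcongr
      exact min_le_left _ _
    calc (∫⁻ t in Set.Ioc (0 : ℝ) 1,
          ∏ j, (ENNReal.ofReal (min ρ (t ^ (-(2 * c j)⁻¹))) ^ 2 * NNReal.pi))
        ≤ ∫⁻ _t in Set.Ioc (0 : ℝ) 1, ∏ _j : Fin n, (ENNReal.ofReal ρ ^ 2 * NNReal.pi) :=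
          lintegral_mono fun t => hb t
      _ = (∏ _j : Fin n, (ENNReal.ofReal ρ ^ 2 * NNReal.pi)) * volume (Set.Ioc (0 : ℝ) 1) :=
          setLIntegral_const _ _
      _ < ⊤ := by
          refine ENNReal.mul_lt_top (ENNReal.prod_lt_top fun j _ => ?_) ?_
          · exact ENNReal.mul_lt_top
              (ENNReal.pow_lt_top ENNReal.ofReal_lt_top) ENNReal.coe_lt_top
          · rw [Real.volume_Ioc]; exact ENNReal.ofReal_lt_top
  have h2 : (∫⁻ t in Set.Ioi (1 : ℝ),
      ∏ j, (ENNReal.ofReal (min ρ (t ^ (-(2 * c j)⁻¹))) ^ 2 * NNReal.pi)) < ⊤ := by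
    have hb : ∀ t : ℝ, t ∈ Set.Ioi (1 : ℝ) →
        (∏ j, (ENNReal.ofReal (min ρ (t ^ (-(2 * c j)⁻¹))) ^ 2 * NNReal.pi))
          ≤ ENNReal.ofReal (t ^ (-S)) * (NNReal.pi : ℝ≥0∞) ^ n := by
      intro t htm
      have ht : (0 : ℝ) < t := lt_trans one_pos htm
      have step1 : (∏ j, (ENNReal.ofReal (min ρ (t ^ (-(2 * c j)⁻¹))) ^ 2 * NNReal.pi))
          ≤ ∏ j, (ENNReal.ofReal (t ^ (-(2 * c j)⁻¹)) ^ 2 * NNReal.pi) := by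
        refine Finset.prod_le_prod' fun j _ => ?_
        gcongr
        exact min_le_right _ _
      refine le_trans step1 (le_of_eq ?_)
      rw [Finset.prod_mul_distrib, Finset.prod_const, Finset.card_univ, Fintype.card_fin]
      congr 1
      have : ∀ j ∈ Finset.univ,
          ENNReal.ofReal (t ^ (-(2 * c j)⁻¹)) ^ 2
            = ENNReal.ofReal ((t ^ (-(2 * c j)⁻¹)) ^ 2) := fun j _ =>
        (ENNReal.ofReal_pow (Real.rpow_nonneg ht.le _) 2).symm
      rw [Finset.prod_congr rfl this, ← ENNReal.ofReal_prod_of_nonneg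
        (fun j _ => by positivity), prod_rpow_eq n c hc ht]
    have hrint : (∫⁻ t in Set.Ioi (1 : ℝ), ENNReal.ofReal (t ^ (-S))) < ⊤ := by
      have hint : IntegrableOn (fun t : ℝ => t ^ (-S)) (Set.Ioi 1) :=
        integrableOn_Ioi_rpow_of_lt (by linarith) one_pos
      have := hint.hasFiniteIntegral
      rwa [hasFiniteIntegral_iff_ofReal ?_] at this
      filter_upwards [ae_restrict_mem measurableSet_Ioi] with t htm
      exact Real.rpow_nonneg (le_of_lt (lt_trans one_pos htm)) _
    calc (∫⁻ t in Set.Ioi (1 : ℝ),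
          ∏ j, (ENNReal.ofReal (min ρ (t ^ (-(2 * c j)⁻¹))) ^ 2 * NNReal.pi))
        ≤ ∫⁻ t in Set.Ioi (1 : ℝ), ENNReal.ofReal (t ^ (-S)) * (NNReal.pi : ℝ≥0∞) ^ n := by
          refine setLIntegral_mono ?_ hb
          exact ((measurable_id.pow_const (-S)).ennreal_ofReal).mul_const _
      _ = (∫⁻ t in Set.Ioi (1 : ℝ), ENNReal.ofReal (t ^ (-S))) * (NNReal.pi : ℝ≥0∞) ^ n :=
          lintegral_mul_const'' _ (by
            exact ((measurable_id.pow_const (-S)).ennreal_ofReal).aemeasurable)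
      _ < ⊤ := ENNReal.mul_lt_top hrint (ENNReal.pow_lt_top ENNReal.coe_lt_top)
  exact ENNReal.add_lt_top.2 ⟨h1, h2⟩

lemma infinite_of_le (n : ℕ) (hn : 1 ≤ n) (c : Fin n → ℝ) (hc : ∀ j, 0 < c j)
    {ρ : ℝ} (hρ : 0 < ρ) (hS : ∑ j, 1 / c j ≤ 1) :
    (∫⁻ t in Set.Ioi (0 : ℝ),
        ∏ j, (ENNReal.ofReal (min ρ (t ^ (-(2 * c j)⁻¹))) ^ 2 * NNReal.pi)) = ⊤ := by
  haveI : Nonempty (Fin n) := ⟨⟨0, hn⟩⟩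
  set S := ∑ j, 1 / c j with hSdef
  set T : ℝ := max 1 (Finset.univ.sup' Finset.univ_nonempty fun j => ρ ^ (-(2 * c j))) with hTdef
  have hT1 : (1 : ℝ) ≤ T := le_max_left _ _
  have hT0 : (0 : ℝ) < T := lt_of_lt_of_le one_pos hT1
  have hmin : ∀ t : ℝ, t ∈ Set.Ioi T → ∀ j, min ρ (t ^ (-(2 * c j)⁻¹)) = t ^ (-(2 * c j)⁻¹) := by
    intro t htm j
    have ht : T < t := htm
    have ht0 : (0 : ℝ) < t := lt_trans hT0 ht
    refine min_eq_right ?_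
    have hle : ρ ^ (-(2 * c j)) ≤ t :=
      le_of_lt (lt_of_le_of_lt (le_trans (Finset.le_sup' (fun j => ρ ^ (-(2 * c j))) (Finset.mem_univ j))
        (le_max_right _ _)) ht)
    have h2 : t ^ (-(2 * c j)⁻¹) ≤ (ρ ^ (-(2 * c j))) ^ (-(2 * c j)⁻¹) :=
      Real.rpow_le_rpow_of_nonpos (Real.rpow_pos_of_pos hρ _) hle
        (neg_nonpos.2 (inv_nonneg.2 (by linarith [hc j])))
    have h3 : (ρ ^ (-(2 * c j))) ^ (-(2 * c j)⁻¹) = ρ := by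
      rw [← Real.rpow_mul hρ.le]
      have : (-(2 * c j)) * (-(2 * c j)⁻¹) = 1 := by
        have : (2 * c j) ≠ 0 := ne_of_gt (mul_pos two_pos (hc j))
        field_simp
        exact div_self (hc j).ne'
      rw [this, Real.rpow_one]
    rwa [h3] at h2
  have hpi : (1 : ℝ≥0∞) ≤ (NNReal.pi : ℝ≥0∞) := by
    rw [ENNReal.one_le_coe_iff, ← NNReal.coe_le_coe, NNReal.coe_one, NNReal.coe_real_pi]
    linarith [Real.pi_gt_three]
  have hlb : ∀ t : ℝ, t ∈ Set.Ioi T →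
      ENNReal.ofReal (t ^ (-S))
        ≤ ∏ j, (ENNReal.ofReal (min ρ (t ^ (-(2 * c j)⁻¹))) ^ 2 * NNReal.pi) := by
    intro t htm
    have ht0 : (0 : ℝ) < t := lt_trans hT0 htm
    have heq : (∏ j, (ENNReal.ofReal (min ρ (t ^ (-(2 * c j)⁻¹))) ^ 2 * NNReal.pi))
        = ENNReal.ofReal (t ^ (-S)) * (NNReal.pi : ℝ≥0∞) ^ n := by
      have : ∀ j ∈ Finset.univ,
          (ENNReal.ofReal (min ρ (t ^ (-(2 * c j)⁻¹))) ^ 2 * (NNReal.pi : ℝ≥0∞))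
            = ENNReal.ofReal ((t ^ (-(2 * c j)⁻¹)) ^ 2) * NNReal.pi := by
        intro j _
        rw [hmin t htm j, ← ENNReal.ofReal_pow (Real.rpow_nonneg ht0.le _) 2]
      rw [Finset.prod_congr rfl this, Finset.prod_mul_distrib, Finset.prod_const,
        Finset.card_univ, Fintype.card_fin,
        ← ENNReal.ofReal_prod_of_nonneg (fun j _ => by positivity),
        prod_rpow_eq n c hc ht0]
    rw [heq]
    exact le_mul_of_one_le_right (by positivity) (one_le_pow_of_one_le' hpi n)
  have hdiv : (∫⁻ t in Set.Ioi T, ENNReal.ofReal (t ^ (-S))) = ⊤ := by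
    by_contra h
    have hfin : HasFiniteIntegral (fun t : ℝ => t ^ (-S)) (volume.restrict (Set.Ioi T)) := by
      rw [hasFiniteIntegral_iff_ofReal ?_]
      · exact lt_top_iff_ne_top.2 h
      filter_upwards [ae_restrict_mem measurableSet_Ioi] with t htm
      exact Real.rpow_nonneg (le_of_lt (lt_trans hT0 htm)) _
    have hint : IntegrableOn (fun t : ℝ => t ^ (-S)) (Set.Ioi T) :=
      ⟨(measurable_id.pow_const (-S)).aestronglyMeasurable, hfin⟩
    rw [integrableOn_Ioi_rpow_iff hT0] at hint
    linarith
  refine top_le_iff.1 ?_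
  calc (⊤ : ℝ≥0∞) = ∫⁻ t in Set.Ioi T, ENNReal.ofReal (t ^ (-S)) := hdiv.symm
    _ ≤ ∫⁻ t in Set.Ioi T,
          ∏ j, (ENNReal.ofReal (min ρ (t ^ (-(2 * c j)⁻¹))) ^ 2 * NNReal.pi) := by
        refine setLIntegral_mono ?_ hlb
        refine Finset.measurable_prod _ fun j _ => ?_
        exact (((measurable_const.min
          (measurable_id.pow_const _)).ennreal_ofReal).pow_const 2).mul_const _
    _ ≤ ∫⁻ t in Set.Ioi (0 : ℝ),
          ∏ j, (ENNReal.ofReal (min ρ (t ^ (-(2 * c j)⁻¹))) ^ 2 * NNReal.pi) :=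
        lintegral_mono_set (Set.Ioi_subset_Ioi hT0.le)

end Stmt11Aux

/-- For `φ(z) = max_j c_j log|z_j|` with `c_j > 0`, `e^{-2φ}` is integrable near `0`
in `ℂ^n` if and only if `Σ_j 1/c_j > 1`. -/
theorem stmt_11 (n : ℕ) (hn : 1 ≤ n) (c : Fin n → ℝ) (hc : ∀ j, 0 < c j) :
    (∃ U ∈ nhds (0 : Fin n → ℂ),
      IntegrableOn
        (fun z : Fin n → ℂ =>
          Real.exp (-2 * ⨆ j, c j * Real.log (‖z j‖))) U volume) ↔
    1 < ∑ j, 1 / c j := by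
  constructor
  · rintro ⟨U, hU, hInt⟩
    by_contra hS
    push_neg at hS
    obtain ⟨ρ, hρ, hball⟩ := Metric.mem_nhds_iff.1 hU
    have h2 : IntegrableOn
        (fun z : Fin n → ℂ => Real.exp (-2 * ⨆ j, c j * Real.log (‖z j‖)))
        (Metric.ball 0 ρ) volume := hInt.mono_set hball
    have h3 := (hasFiniteIntegral_iff_ofReal
      (ae_of_all _ fun z => (Real.exp_pos _).le)).1 h2.hasFiniteIntegral
    rw [Stmt11Aux.key n hn c hc hρ, Stmt11Aux.infinite_of_le n hn c hc hρ hS] at h3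
    exact absurd h3 (lt_irrefl _)
  · intro hS
    refine ⟨Metric.ball 0 1, Metric.ball_mem_nhds _ one_pos, ?_⟩
    refine ⟨(Stmt11Aux.measurable_f n hn c).aestronglyMeasurable, ?_⟩
    rw [hasFiniteIntegral_iff_ofReal (ae_of_all _ fun z => (Real.exp_pos _).le),
      Stmt11Aux.key n hn c hc one_pos]
    exact Stmt11Aux.finite_of_gt n hn c hc one_pos hS
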